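/- For the gating ODE w′ = −g(V_m(t), w) of the Mitchell–Schaeffer model (with V_m any measurable function of time), the interval [0, 1/(V_max−V_min)²] is positively invariant: if 0 ≤ w(0) ≤ 1/(V_max−V_min)², then 0 ≤ w(t) ≤ 1/(V_max−V_min)² for all t ≥ 0. -/

import Mathlib

/-- Auxiliary invariance lemma: if `f 0 ≤ 0` and `f' x ≤ 0` whenever `x ≥ 0` and `f x ≥ 0`,
then `f t ≤ 0` for all `t ≥ 0`. -/
theorem aux_nonpos_invariant {f f' : ℝ → ℝ}
    (hd : ∀ x : ℝ, 0 ≤ x → HasDerivAt f (f' x) x)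
    (h0 : f 0 ≤ 0)
    (hb : ∀ x : ℝ, 0 ≤ x → 0 ≤ f x → f' x ≤ 0) :
    ∀ t : ℝ, 0 ≤ t → f t ≤ 0 := by
  intro t ht
  have key : ∀ r : ℝ, 0 < r → f t ≤ r * t := by
    intro r hr
    have := image_le_of_deriv_right_lt_deriv_boundary'
      (f := f) (f' := f') (a := 0) (b := t)
      (B := fun x => r * x) (B' := fun _ => r)
      (fun x hx => (hd x hx.1).continuousAt.continuousWithinAt)
      (fun x hx => (hd x hx.1).hasDerivWithinAt)
      (by simpa using h0)
      ((continuous_const.mul continuous_id).continuousOn)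
      (fun x hx => ((hasDerivWithinAt_id x _).const_mul r).congr_deriv (mul_one r))
      (fun x hx hfx => by
        have hfx0 : 0 ≤ f x := by
          rw [hfx]; exact mul_nonneg hr.le hx.1
        exact lt_of_le_of_lt (hb x hx.1 hfx0) hr)
    exact this ⟨ht, le_rfl⟩
  by_contra hpos
  push_neg at hpos
  have h1 := key (f t / (t + 1)) (div_pos hpos (by linarith))
  have h2 : f t / (t + 1) * t < f t := by
    rw [div_mul_eq_mul_div, div_lt_iff₀ (by linarith)]
    nlinarith
  linarith


/-- Positive invariance of `[0, 1/(V_max−V_min)²]` for the Mitchell–Schaeffer gating ODE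
`w′ = −g(V_m(t), w)`, where `g(V,w) = w/τ_open − 1/(τ_open (V_max−V_min)²)` for
`V < V_gate`, `g(V,w) = w/τ_close` for `V > V_gate`, and `g(V_gate, w)` lies between these
two values. -/
theorem mitchell_schaeffer_gate_invariant
    (τopen τclose Vgate Vmin Vmax : ℝ)
    (hτopen : 0 < τopen) (hτclose : 0 < τclose) (hV : Vmin < Vmax)
    (g : ℝ → ℝ → ℝ)
    (hgopen : ∀ V w, V < Vgate → g V w = w / τopen - 1 / (τopen * (Vmax - Vmin) ^ 2))
    (hgclose : ∀ V w, Vgate < V → g V w = w / τclose)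
    (hggate : ∀ w : ℝ, g Vgate w ∈
      Set.uIcc (w / τclose) (w / τopen - 1 / (τopen * (Vmax - Vmin) ^ 2)))
    (Vm w : ℝ → ℝ) (hVm : Measurable Vm)
    (hode : ∀ t : ℝ, 0 ≤ t → HasDerivAt w (-(g (Vm t) (w t))) t)
    (h0 : 0 ≤ w 0 ∧ w 0 ≤ 1 / (Vmax - Vmin) ^ 2) :
    ∀ t : ℝ, 0 ≤ t → 0 ≤ w t ∧ w t ≤ 1 / (Vmax - Vmin) ^ 2 := by
  set M : ℝ := 1 / (Vmax - Vmin) ^ 2 with hM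
  have hS : (0:ℝ) < (Vmax - Vmin) ^ 2 := pow_pos (sub_pos.2 hV) 2
  have hMpos : 0 < M := by rw [hM]; exact one_div_pos.2 hS
  have hMeq : 1 / (τopen * (Vmax - Vmin) ^ 2) = M / τopen := by
    rw [hM]; field_simp
  -- `g V u ≤ 0` whenever `u ≤ 0`
  have hlow : ∀ V u : ℝ, u ≤ 0 → g V u ≤ 0 := by
    intro V u hu
    have e1 : u / τclose ≤ 0 := div_nonpos_of_nonpos_of_nonneg hu hτclose.le
    have e2 : u / τopen - 1 / (τopen * (Vmax - Vmin) ^ 2) ≤ 0 := by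
      rw [hMeq]
      have : u / τopen ≤ 0 := div_nonpos_of_nonpos_of_nonneg hu hτopen.le
      have : 0 ≤ M / τopen := div_nonneg hMpos.le hτopen.le
      linarith [div_nonpos_of_nonpos_of_nonneg hu hτopen.le]
    rcases lt_trichotomy V Vgate with h | h | h
    · rw [hgopen V u h]; exact e2
    · subst h
      rcases Set.mem_uIcc.1 (hggate u) with ⟨_, h2⟩ | ⟨_, h2⟩
      · exact h2.trans e2
      · exact h2.trans e1
    · rw [hgclose V u h]; exact e1
  -- `0 ≤ g V u` whenever `M ≤ u`
  have hhigh : ∀ V u : ℝ, M ≤ u → 0 ≤ g V u := by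
    intro V u hu
    have hu0 : 0 ≤ u := le_trans hMpos.le hu
    have e1 : 0 ≤ u / τclose := div_nonneg hu0 hτclose.le
    have e2 : 0 ≤ u / τopen - 1 / (τopen * (Vmax - Vmin) ^ 2) := by
      rw [hMeq, sub_nonneg]
      exact div_le_div_of_nonneg_right hu hτopen.le
    rcases lt_trichotomy V Vgate with h | h | h
    · rw [hgopen V u h]; exact e2
    · subst h
      rcases Set.mem_uIcc.1 (hggate u) with ⟨h1, _⟩ | ⟨h1, _⟩
      · exact le_trans e1 h1
      · exact le_trans e2 h1
    · rw [hgclose V u h]; exact e1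
  intro t ht
  constructor
  · -- lower bound: apply aux lemma to `-w`
    have := aux_nonpos_invariant (f := fun s => -w s)
      (f' := fun s => g (Vm s) (w s))
      (fun x hx => by have := (hode x hx).neg; rwa [neg_neg] at this)
      (by simpa using h0.1)
      (fun x hx hfx => hlow (Vm x) (w x) (by simpa using hfx))
      t ht
    simpa using this
  · -- upper bound: apply aux lemma to `w - M`
    have := aux_nonpos_invariant (f := fun s => w s - M)
      (f' := fun s => -(g (Vm s) (w s)))
      (fun x hx => (hode x hx).sub_const M)
      (by simpa using h0.2)
      (fun x hx hfx => by
        have hfx' : 0 ≤ w x - M := hfx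
        have : M ≤ w x := by linarith
        simpa using hhigh (Vm x) (w x) this)
      t ht
    have h' : w t - M ≤ 0 := this
    linarith
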